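/- arXiv:2004.07262 — 2 statements merged into one kernel-verified Lean document; each statement's English description precedes it below -/
import Mathlib

section
/- Let a₁,…,aₙ ∈ ℤ^d be nonzero. The semigroup ℕA is pointed (i.e. the only u ∈ ℕA with −u ∈ ℕA is u = 0) if and only if there exists a group homomorphism φ : ℤ^d → ℤ with φ(a_j) > 0 for every j = 1,…,n. -/
/-- The `j`-th column of the integer matrix `A`. -/
def matCol {d n : ℕ} (A : Matrix (Fin d) (Fin n) ℤ) (j : Fin n) : Fin d → ℤ := fun i => A i j

/-- The semigroup `ℕA ⊆ ℤ^d` generated by the columns of `A`. -/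
def semigroupNA {d n : ℕ} (A : Matrix (Fin d) (Fin n) ℤ) : Set (Fin d → ℤ) :=
  {v | ∃ c : Fin n → ℕ, v = ∑ j, c j • matCol A j}

/-- `A` is pointed: the only unit of the semigroup `ℕA` is `0`. -/
def IsPointed {d n : ℕ} (A : Matrix (Fin d) (Fin n) ℤ) : Prop :=
  ∀ v ∈ semigroupNA A, -v ∈ semigroupNA A → v = 0

open Finset Matrix

lemma farkasQ {d : ℕ} : ∀ {n : ℕ} (a : Fin n → (Fin d → ℚ)) (b : Fin d → ℚ),
    (¬ ∃ μ : Fin n → ℚ, (∀ i, 0 ≤ μ i) ∧ b = ∑ i, μ i • a i) →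
    ∃ y : Fin d → ℚ, (∀ i, 0 ≤ y ⬝ᵥ a i) ∧ y ⬝ᵥ b < 0 := by
  intro n
  induction n with
  | zero =>
    intro a b h
    refine ⟨-b, fun i => i.elim0, ?_⟩
    have hb : b ≠ 0 := by
      rintro rfl; exact h ⟨0, fun i => le_refl _, by simp⟩
    have hpos : 0 < b ⬝ᵥ b :=
      lt_of_le_of_ne (Finset.sum_nonneg fun i _ => mul_self_nonneg _)
        (fun e => hb (dotProduct_self_eq_zero.mp e.symm))
    simpa [neg_dotProduct] using hpos
  | succ n ih =>
    intro a b h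
    set a' : Fin n → (Fin d → ℚ) := fun i => a i.castSucc with ha'
    set an : Fin d → ℚ := a (Fin.last n) with han
    have h' : ¬ ∃ μ : Fin n → ℚ, (∀ i, 0 ≤ μ i) ∧ b = ∑ i, μ i • a' i := by
      rintro ⟨μ, hμ, hb⟩
      refine h ⟨Fin.snoc μ 0, ?_, ?_⟩
      · intro i
        induction i using Fin.lastCases with
        | last => simp
        | cast i => simpa using hμ i
      · rw [Fin.sum_univ_castSucc]
        simpa using hb
    obtain ⟨y, hy, hyb⟩ := ih a' b h'
    by_cases hc : 0 ≤ y ⬝ᵥ an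
    · refine ⟨y, ?_, hyb⟩
      intro i
      induction i using Fin.lastCases with
      | last => exact hc
      | cast i => exact hy i
    push_neg at hc
    have hcne : y ⬝ᵥ an ≠ 0 := ne_of_lt hc
    set c : ℚ := y ⬝ᵥ an with hcdef
    -- projected vectors
    set B : Fin n → (Fin d → ℚ) := fun i => c • a' i - (y ⬝ᵥ a' i) • an with hB
    set b' : Fin d → ℚ := c • b - (y ⬝ᵥ b) • an with hb'
    have hB' : ¬ ∃ μ : Fin n → ℚ, (∀ i, 0 ≤ μ i) ∧ b' = ∑ i, μ i • B i := by
      rintro ⟨μ, hμ, hbB⟩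
      set k : ℚ := y ⬝ᵥ b - ∑ i, μ i * (y ⬝ᵥ a' i) with hk
      have hknum : k < 0 := by
        have : 0 ≤ ∑ i, μ i * (y ⬝ᵥ a' i) :=
          Finset.sum_nonneg fun i _ => mul_nonneg (hμ i) (hy i)
        have := hyb
        rw [hk]; linarith
      have hbBx : ∀ x, c * b x - (y ⬝ᵥ b) * an x
          = ∑ i, μ i * (c * a' i x - (y ⬝ᵥ a' i) * an x) := by
        intro x
        have := congrFun hbB x
        simpa [hb', hB, Finset.sum_apply, smul_eq_mul, mul_sub] using this
      have hkey : b = ∑ i, μ i • a' i + (k / c) • an := by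
        funext x
        have esum : ∑ i, μ i * (c * a' i x - (y ⬝ᵥ a' i) * an x)
            = c * (∑ i, μ i * a' i x) - (∑ i, μ i * (y ⬝ᵥ a' i)) * an x := by
          calc ∑ i, μ i * (c * a' i x - (y ⬝ᵥ a' i) * an x)
              = ∑ i, (c * (μ i * a' i x) - (μ i * (y ⬝ᵥ a' i)) * an x) :=
                Finset.sum_congr rfl fun i _ => by ring
            _ = _ := by rw [Finset.sum_sub_distrib, Finset.mul_sum, Finset.sum_mul]
        have e := hbBx x
        rw [esum] at e
        have hx : b x = (∑ i, μ i * a' i x) + (k / c) * an x := by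
          rw [hk]
          field_simp
          linear_combination e
        simpa [Finset.sum_apply, smul_eq_mul] using hx
      refine h ⟨Fin.snoc μ (k / c), ?_, ?_⟩
      · intro i
        induction i using Fin.lastCases with
        | last => simpa using le_of_lt (div_pos_of_neg_of_neg hknum hc)
        | cast i => simpa using hμ i
      · rw [Fin.sum_univ_castSucc]
        simpa using hkey
    obtain ⟨z, hz, hzb⟩ := ih B b' hB'
    refine ⟨c • z - (z ⬝ᵥ an) • y, ?_, ?_⟩
    · intro i
      induction i using Fin.lastCases with
      | last =>
        have : (c • z - (z ⬝ᵥ an) • y) ⬝ᵥ an = 0 := by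
          simp [sub_dotProduct, smul_dotProduct, smul_eq_mul, ← hcdef]
          ring
        rw [this]
      | cast i =>
        have : (c • z - (z ⬝ᵥ an) • y) ⬝ᵥ a i.castSucc = z ⬝ᵥ B i := by
          simp [hB, sub_dotProduct, smul_dotProduct, dotProduct_sub,
            dotProduct_smul, smul_eq_mul, ha']
          ring
        rw [this]; exact hz i
    · have : (c • z - (z ⬝ᵥ an) • y) ⬝ᵥ b = z ⬝ᵥ b' := by
        simp [hb', sub_dotProduct, smul_dotProduct, dotProduct_sub,
          dotProduct_smul, smul_eq_mul]
        ring
      rw [this]; exact hzb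

/-- Clearing denominators of a finite family of rationals. -/
lemma exists_int_scale {m : ℕ} (q : Fin m → ℚ) :
    ∃ (N : ℚ) (z : Fin m → ℤ), 0 < N ∧ ∀ i, (z i : ℚ) = q i * N := by
  refine ⟨∏ k, ((q k).den : ℚ),
    fun i => (q i).num * ∏ k ∈ Finset.univ.erase i, ((q k).den : ℤ), ?_, ?_⟩
  · exact Finset.prod_pos fun k _ => by exact_mod_cast (q k).den_pos
  · intro i
    have hden : ((q i).den : ℚ) ≠ 0 := by exact_mod_cast (q i).den_pos.ne'
    have h1 : q i * ((q i).den : ℚ) = ((q i).num : ℚ) := by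
      exact Rat.mul_den_eq_num _
    rw [← Finset.mul_prod_erase Finset.univ _ (Finset.mem_univ i)]
    push_cast
    rw [← mul_assoc, h1]

lemma sum_dotProduct' {d m : ℕ} (Y : Fin m → (Fin d → ℚ)) (v : Fin d → ℚ) :
    (∑ k, Y k) ⬝ᵥ v = ∑ k, Y k ⬝ᵥ v := by
  simp only [dotProduct, Finset.sum_apply, Finset.sum_mul]
  exact Finset.sum_comm

/-- Gordan's theorem over ℚ. -/
lemma gordanQ {d n : ℕ} (a : Fin n → (Fin d → ℚ))
    (hrel : ∀ c : Fin n → ℚ, (∀ i, 0 ≤ c i) → ∑ i, c i • a i = 0 → c = 0) :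
    ∃ y : Fin d → ℚ, ∀ j, 0 < y ⬝ᵥ a j := by
  have key : ∀ j : Fin n, ∃ y : Fin d → ℚ, (∀ i, 0 ≤ y ⬝ᵥ a i) ∧ 0 < y ⬝ᵥ a j := by
    intro j
    have hnc : ¬ ∃ μ : Fin n → ℚ, (∀ i, 0 ≤ μ i) ∧ (-(a j)) = ∑ i, μ i • a i := by
      rintro ⟨μ, hμ, hμe⟩
      set e : Fin n → ℚ := Pi.single j 1 with hedef
      set c : Fin n → ℚ := μ + e with hcdef
      have hc0 : ∀ i, 0 ≤ c i := by
        intro i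
        have : (0:ℚ) ≤ e i := by
          rcases eq_or_ne i j with rfl | hne <;> simp [hedef, Pi.single_apply, *]
        simpa [hcdef] using add_nonneg (hμ i) this
      have hsing : ∑ i, e i • a i = a j := by
        rw [Finset.sum_eq_single j]
        · simp [hedef]
        · intro i _ hij; simp [hedef, Pi.single_apply, hij]
        · simp
      have hsum : ∑ i, c i • a i = 0 := by
        simp only [hcdef, Pi.add_apply, add_smul, Finset.sum_add_distrib, hsing]
        rw [← hμe]; simp
      have := congrFun (hrel c hc0 hsum) j
      simp [hcdef, hedef, Pi.single_apply] at this
      have := hμ j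
      linarith
    obtain ⟨y, hy, hyb⟩ := farkasQ a (-(a j)) hnc
    exact ⟨y, hy, by simpa [dotProduct_neg] using hyb⟩
  choose Y hY1 hY2 using key
  refine ⟨∑ k, Y k, fun j => ?_⟩
  rw [sum_dotProduct']
  exact Finset.sum_pos' (fun k _ => hY1 k j) ⟨j, Finset.mem_univ j, hY2 j⟩

/-- Pointedness implies triviality of ℕ-relations among nonzero columns. -/
lemma stepA {d n : ℕ} (A : Matrix (Fin d) (Fin n) ℤ) (hcols : ∀ j, matCol A j ≠ 0)
    (hp : IsPointed A) :
    ∀ m : Fin n → ℕ, ∑ j, m j • matCol A j = 0 → ∀ k, m k = 0 := by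
  intro m hm k
  set v : Fin d → ℤ := (m k) • matCol A k with hv
  have hvmem : v ∈ semigroupNA A := by
    refine ⟨Pi.single k (m k), ?_⟩
    rw [Finset.sum_eq_single k]
    · simp [hv]
    · intro i _ hij; simp [Pi.single_apply, hij]
    · simp
  have hnvmem : -v ∈ semigroupNA A := by
    refine ⟨Function.update m k 0, ?_⟩
    have e1 := Finset.add_sum_erase Finset.univ
      (fun j => (Function.update m k 0) j • matCol A j) (Finset.mem_univ k)
    have e2 := Finset.add_sum_erase Finset.univ
      (fun j => m j • matCol A j) (Finset.mem_univ k)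
    have h1 : ∑ j, (Function.update m k 0) j • matCol A j
        = ∑ j ∈ Finset.univ.erase k, m j • matCol A j := by
      rw [← e1]
      simp only [Function.update_self, zero_smul, zero_add]
      exact Finset.sum_congr rfl fun j hj => by
        rw [Function.update_of_ne (Finset.ne_of_mem_erase hj)]
    have h2 : (m k) • matCol A k + ∑ j ∈ Finset.univ.erase k, m j • matCol A j = 0 :=
      e2.trans hm
    rw [h1, eq_neg_of_add_eq_zero_right h2, hv]
  have hv0 : v = 0 := hp v hvmem hnvmem
  obtain ⟨x, hx⟩ : ∃ x, matCol A k x ≠ 0 := Function.ne_iff.mp (hcols k)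
  have := congrFun hv0 x
  rw [hv] at this
  simp only [Pi.smul_apply, smul_eq_mul, Pi.zero_apply, nsmul_eq_mul] at this
  rcases mul_eq_zero.mp this with h | h
  · exact_mod_cast h
  · exact absurd h hx

/-- for nonzero columns `a₁,…,aₙ ∈ ℤ^d`, the semigroup `ℕA` is pointed iff
there is a group homomorphism `φ : ℤ^d → ℤ` positive on every column. -/
theorem pointed_iff_exists_positive_functional
    {d n : ℕ} (A : Matrix (Fin d) (Fin n) ℤ) (hcols : ∀ j, matCol A j ≠ 0) :
    IsPointed A ↔ ∃ φ : (Fin d → ℤ) →+ ℤ, ∀ j, 0 < φ (matCol A j) := by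
  constructor
  · intro hp
    set aQ : Fin n → (Fin d → ℚ) := fun j x => ((A x j : ℤ) : ℚ) with haQ
    have hrel : ∀ c : Fin n → ℚ, (∀ i, 0 ≤ c i) → ∑ i, c i • aQ i = 0 → c = 0 := by
      intro c hc hsum
      obtain ⟨N, z, hN, hz⟩ := exists_int_scale c
      have hznn : ∀ i, 0 ≤ z i := by
        intro i
        have : (0:ℚ) ≤ (z i : ℚ) := by rw [hz i]; exact mul_nonneg (hc i) hN.le
        exact_mod_cast this
      set m : Fin n → ℕ := fun i => (z i).toNat with hmdef
      have hmz : ∀ i, (m i : ℤ) = z i := fun i => Int.toNat_of_nonneg (hznn i)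
      have hmrel : ∑ j, m j • matCol A j = 0 := by
        funext x
        have hx : ∑ i, c i * aQ i x = 0 := by
          have := congrFun hsum x
          simpa [Finset.sum_apply] using this
        have hcast : ((∑ j, m j • matCol A j) x : ℚ) = N * ∑ i, c i * aQ i x := by
          rw [Finset.sum_apply, Int.cast_sum, Finset.mul_sum]
          refine Finset.sum_congr rfl fun i _ => ?_
          have hmq : ((m i : ℕ) : ℚ) = c i * N := by
            rw [← hz i]; exact_mod_cast hmz i
          have h1 : ((m i • matCol A i) x : ℤ) = (m i : ℤ) * A x i := by
            simp [matCol, Pi.smul_apply, nsmul_eq_mul]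
          rw [h1]
          push_cast
          rw [hmq]
          simp only [haQ]
          ring
        rw [hx, mul_zero] at hcast
        exact_mod_cast hcast
      have hm0 := stepA A hcols hp m hmrel
      funext i
      have : (z i : ℚ) = 0 := by
        rw [← hmz i, hm0 i]; simp
      rw [hz i] at this
      rcases mul_eq_zero.mp this with h | h
      · exact h
      · exact absurd h hN.ne'
    obtain ⟨y, hy⟩ := gordanQ aQ hrel
    obtain ⟨N, z, hN, hz⟩ := exists_int_scale y
    refine ⟨{ toFun := fun v => ∑ i, z i * v i,
              map_zero' := by simp,
              map_add' := fun v w => by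
                simp [mul_add, Finset.sum_add_distrib] }, ?_⟩
    intro j
    have hcast : ((∑ i, z i * (matCol A j) i : ℤ) : ℚ) = N * (y ⬝ᵥ aQ j) := by
      push_cast
      rw [dotProduct, Finset.mul_sum]
      refine Finset.sum_congr rfl fun i _ => ?_
      rw [hz i, matCol]
      ring
    have hpos : (0:ℚ) < ((∑ i, z i * (matCol A j) i : ℤ) : ℚ) := by
      rw [hcast]; exact mul_pos hN (hy j)
    exact_mod_cast hpos
  · rintro ⟨φ, hφ⟩ v ⟨c, hc⟩ ⟨c', hc'⟩
    have key : ∀ (e : Fin n → ℕ) (w : Fin d → ℤ), w = ∑ j, e j • matCol A j →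
        φ w = ∑ j, e j • φ (matCol A j) ∧ 0 ≤ φ w := by
      intro e w hw
      have h1 : φ w = ∑ j, e j • φ (matCol A j) := by
        rw [hw, map_sum]
        exact Finset.sum_congr rfl fun j _ => map_nsmul φ _ _
      refine ⟨h1, ?_⟩
      rw [h1]
      exact Finset.sum_nonneg fun j _ => nsmul_nonneg (hφ j).le (e j)
    obtain ⟨h1, h2⟩ := key c v hc
    obtain ⟨_, h3⟩ := key c' (-v) hc'
    have hφv : φ v = 0 := le_antisymm (by have := map_neg φ v ▸ h3; linarith) h2
    have hterm : ∀ j ∈ Finset.univ, c j • φ (matCol A j) = 0 := by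
      rw [hφv] at h1
      exact (Finset.sum_eq_zero_iff_of_nonneg
        (fun j _ => nsmul_nonneg (hφ j).le (c j))).mp h1.symm
    have hc0 : ∀ j, c j = 0 := by
      intro j
      have := hterm j (Finset.mem_univ j)
      rw [nsmul_eq_mul] at this
      rcases mul_eq_zero.mp this with h | h
      · exact_mod_cast h
      · exact absurd h (hφ j).ne'
    rw [hc]
    exact Finset.sum_eq_zero fun j _ => by rw [hc0 j, zero_smul]
end

section
/- Let a ∈ ℂ and let b ∈ ℂ not be a nonpositive integer. The Kummer confluent hypergeometric series ₁F₁(a;b;z) = ∑_{n=0}^∞ ([a]_n/[b]_n) · zⁿ/n! converges for every z ∈ ℂ, so it defines an entire function f, and f satisfies z·f''(z) + (b − z)·f'(z) − a·f(z) = 0 for all z ∈ ℂ (this is the p = q = 1 case of the generalized hypergeometric differential equation; in particular the Kummer confluent function is analytic at every finite z). -/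
/-- The ascending factorial `[x]_n = x(x+1)⋯(x+n−1)`. -/
noncomputable def ascFac (x : ℂ) (n : ℕ) : ℂ := ∏ k ∈ Finset.range n, (x + k)

lemma ascFac_succ (x : ℂ) (n : ℕ) : ascFac x (n+1) = ascFac x n * (x + n) := by
  simp [ascFac, Finset.prod_range_succ]

lemma kummer_aux_summable (c : ℕ → ℂ)
    (hc : ∀ r : ℝ, 1 ≤ r → Summable fun n => ‖c n‖ * r ^ n) (z : ℂ) :
    Summable fun n => c n * z ^ n := by
  refine Summable.of_norm (Summable.of_nonneg_of_le (fun n => norm_nonneg _)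
    (fun n => ?_) (hc (‖z‖ + 1) (by linarith [norm_nonneg z])))
  rw [norm_mul, norm_pow]
  exact mul_le_mul_of_nonneg_left
    (pow_le_pow_left₀ (norm_nonneg z) (by linarith) n) (norm_nonneg _)

lemma kummer_aux_shift (c : ℕ → ℂ)
    (hc : ∀ r : ℝ, 1 ≤ r → Summable fun n => ‖c n‖ * r ^ n) :
    ∀ r : ℝ, 1 ≤ r → Summable fun n => ‖c (n+1) * ((n : ℂ) + 1)‖ * r ^ n := by
  intro r hr
  have h2r : Summable fun n => ‖c (n+1)‖ * (2*r) ^ (n+1) := by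
    have := hc (2*r) (by linarith)
    exact ((summable_nat_add_iff 1).mpr this)
  refine Summable.of_nonneg_of_le (fun n => by positivity) (fun n => ?_) h2r
  rw [norm_mul]
  have h1 : ‖((n : ℂ) + 1)‖ = (n : ℝ) + 1 := by
    rw [show ((n : ℂ) + 1) = ((n+1 : ℕ) : ℂ) by push_cast; ring, Complex.norm_natCast]
    push_cast; ring
  rw [h1]
  have h2 : ((n:ℝ) + 1) * r ^ n ≤ (2*r) ^ (n+1) := by
    have hn : ((n:ℝ) + 1) ≤ 2 ^ (n+1) := by
      have := Nat.lt_two_pow_self (n := n+1)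
      calc ((n:ℝ) + 1) = ((n+1 : ℕ) : ℝ) := by push_cast; ring
        _ ≤ ((2^(n+1) : ℕ) : ℝ) := by exact_mod_cast this.le
        _ = 2 ^ (n+1) := by push_cast; ring
    calc ((n:ℝ) + 1) * r ^ n ≤ 2 ^ (n+1) * r ^ (n+1) := by
          apply mul_le_mul hn (pow_le_pow_right₀ hr (by omega)) (by positivity) (by positivity)
      _ = (2*r) ^ (n+1) := by rw [mul_pow]
  calc ‖c (n+1)‖ * (((n:ℝ)+1)) * r ^ n = ‖c (n+1)‖ * (((n:ℝ)+1) * r ^ n) := by ring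
    _ ≤ ‖c (n+1)‖ * (2*r) ^ (n+1) := mul_le_mul_of_nonneg_left h2 (norm_nonneg _)

lemma kummer_aux_hasDerivAt (c : ℕ → ℂ)
    (hc : ∀ r : ℝ, 1 ≤ r → Summable fun n => ‖c n‖ * r ^ n) (z : ℂ) :
    HasDerivAt (fun w => ∑' n, c n * w ^ n)
      (∑' n, c (n+1) * ((n : ℂ) + 1) * z ^ n) z := by
  set R : ℝ := ‖z‖ + 1 with hRdef
  have hR1 : (1:ℝ) ≤ R := by have := norm_nonneg z; simp only [hRdef]; linarith
  have hR0 : (0:ℝ) < R := by linarith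
  have hu : Summable fun n => ‖c n‖ * ((n:ℝ) * R ^ (n-1)) := by
    have h2R : Summable fun n => ‖c n‖ * (2*R) ^ n := hc (2*R) (by linarith)
    refine Summable.of_nonneg_of_le (fun n => by positivity) (fun n => ?_) h2R
    have hn : (n:ℝ) ≤ 2 ^ n := by
      exact_mod_cast (Nat.lt_two_pow_self (n := n)).le
    have : (n:ℝ) * R ^ (n-1) ≤ 2 ^ n * R ^ n := by
      apply mul_le_mul hn (pow_le_pow_right₀ hR1 (Nat.sub_le n 1)) (by positivity) (by positivity)
    calc ‖c n‖ * ((n:ℝ) * R ^ (n-1)) ≤ ‖c n‖ * (2 ^ n * R ^ n) := by gcongr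
      _ = ‖c n‖ * (2*R) ^ n := by rw [mul_pow]
  have hg : ∀ n : ℕ, ∀ y : ℂ, y ∈ Metric.ball (0:ℂ) R →
      HasDerivAt (fun w => c n * w ^ n) (c n * ((n : ℂ) * y ^ (n-1))) y :=
    fun n y _ => (hasDerivAt_pow n y).const_mul (c n)
  have hg' : ∀ n : ℕ, ∀ y : ℂ, y ∈ Metric.ball (0:ℂ) R →
      ‖c n * ((n : ℂ) * y ^ (n-1))‖ ≤ ‖c n‖ * ((n:ℝ) * R ^ (n-1)) := by
    intro n y hy
    rw [Metric.mem_ball, dist_zero_right] at hy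
    rw [norm_mul, norm_mul, norm_pow, Complex.norm_natCast]
    exact mul_le_mul_of_nonneg_left
      (mul_le_mul_of_nonneg_left (pow_le_pow_left₀ (norm_nonneg y) hy.le _)
        (Nat.cast_nonneg n)) (norm_nonneg _)
  have hz : z ∈ Metric.ball (0:ℂ) R := by
    rw [Metric.mem_ball, dist_zero_right]; linarith
  have key := hasDerivAt_tsum_of_isPreconnected hu Metric.isOpen_ball
    (convex_ball (0:ℂ) R).isPreconnected hg hg' hz (kummer_aux_summable c hc z) hz
  have hsum : Summable fun n => c n * ((n : ℂ) * z ^ (n-1)) :=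
    Summable.of_norm (Summable.of_nonneg_of_le (fun n => norm_nonneg _)
      (fun n => hg' n z hz) hu)
  have heq : ∑' n, c n * ((n : ℂ) * z ^ (n-1)) = ∑' n, c (n+1) * ((n : ℂ) + 1) * z ^ n := by
    rw [hsum.tsum_eq_zero_add]
    simp only [Nat.cast_zero, zero_mul, mul_zero, zero_add]
    apply tsum_congr
    intro n
    push_cast
    ring
  rw [heq] at key
  exact key

/-- the Kummer confluent hypergeometric series
`₁F₁(a;b;z) = ∑ₙ ([a]_n/[b]_n)·zⁿ/n!` converges for every `z ∈ ℂ`, defines an entire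
function `f`, and satisfies `z·f'' + (b−z)·f' − a·f = 0` everywhere. -/
theorem kummer_confluent_series_is_entire_and_solves_kummer_equation
    (a b : ℂ) (hb : ∀ m : ℕ, b ≠ -(m : ℂ)) :
    (∀ z : ℂ, Summable fun n : ℕ => ascFac a n / ascFac b n * z ^ n / (n.factorial : ℂ)) ∧
    Differentiable ℂ
      (fun w : ℂ => ∑' n : ℕ, ascFac a n / ascFac b n * w ^ n / (n.factorial : ℂ)) ∧
    (∀ z : ℂ,
      z * deriv (deriv (fun w : ℂ =>
          ∑' n : ℕ, ascFac a n / ascFac b n * w ^ n / (n.factorial : ℂ))) z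
        + (b - z) * deriv (fun w : ℂ =>
            ∑' n : ℕ, ascFac a n / ascFac b n * w ^ n / (n.factorial : ℂ)) z
        - a * ∑' n : ℕ, ascFac a n / ascFac b n * z ^ n / (n.factorial : ℂ) = 0) := by
  -- coefficients
  set c : ℕ → ℂ := fun n => ascFac a n / ascFac b n / (n.factorial : ℂ) with hcdef
  have hbk : ∀ k : ℕ, b + (k : ℂ) ≠ 0 := by
    intro k h
    exact hb k (by linear_combination h)
  have hbne : ∀ n, ascFac b n ≠ 0 := by
    intro n
    exact Finset.prod_ne_zero_iff.mpr fun k _ => hbk k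
  have hfacne : ∀ n : ℕ, ((n.factorial : ℂ)) ≠ 0 := fun n =>
    Nat.cast_ne_zero.mpr (Nat.factorial_ne_zero n)
  have hn1 : ∀ n : ℕ, ((n : ℂ) + 1) ≠ 0 := by
    intro n h
    have : ((n+1 : ℕ) : ℂ) = 0 := by push_cast; linear_combination h
    exact Nat.cast_ne_zero.mpr (Nat.succ_ne_zero n) this
  -- recurrence
  have hrec : ∀ n : ℕ, c (n+1) * ((b + n) * ((n : ℂ) + 1)) = c n * (a + n) := by
    intro n
    have e1 := hbk n
    have e2 := hn1 n
    have e3 := hbne n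
    have e4 := hfacne n
    simp only [hcdef]
    rw [ascFac_succ, ascFac_succ, Nat.factorial_succ]
    push_cast
    field_simp
  -- the closed form of the ratio
  have hratio : ∀ n : ℕ, c (n+1) = c n * ((a + n) / ((b + n) * ((n : ℂ) + 1))) := by
    intro n
    have e1 := hbk n
    have e2 := hn1 n
    field_simp
    linear_combination hrec n
  -- ratio tends to zero
  have hT : Filter.Tendsto (fun n : ℕ => ‖(a + n) / ((b + n) * ((n : ℂ) + 1))‖)
      Filter.atTop (nhds 0) := by
    have h1 : Filter.Tendsto (fun n : ℕ => (a - b) / (b + n)) Filter.atTop (nhds 0) := by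
      rw [tendsto_zero_iff_norm_tendsto_zero]
      simp only [norm_div]
      apply Filter.Tendsto.div_atTop (tendsto_const_nhds (x := ‖a - b‖))
      apply Filter.tendsto_atTop_mono ?_
        (Filter.tendsto_atTop_add_const_right _ (-‖b‖) tendsto_natCast_atTop_atTop)
      intro n
      have h := norm_sub_norm_le ((n : ℂ)) (-b)
      rw [sub_neg_eq_add, norm_neg, Complex.norm_natCast] at h
      calc (n : ℝ) + -‖b‖ = (n : ℝ) - ‖b‖ := by ring
        _ ≤ ‖(n : ℂ) + b‖ := h
        _ = ‖b + (n : ℂ)‖ := by rw [add_comm]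
    have h2 : Filter.Tendsto (fun n : ℕ => 1 / ((n : ℂ) + 1)) Filter.atTop (nhds 0) := by
      rw [tendsto_zero_iff_norm_tendsto_zero]
      have : (fun n : ℕ => ‖1 / ((n : ℂ) + 1)‖) = fun n : ℕ => 1 / ((n : ℝ) + 1) := by
        funext n
        rw [norm_div, norm_one, show ((n : ℂ) + 1) = ((n+1 : ℕ) : ℂ) by push_cast; ring,
          Complex.norm_natCast]
        push_cast; ring
      rw [this]
      exact tendsto_one_div_add_atTop_nhds_zero_nat
    have h3 : Filter.Tendsto (fun n : ℕ => (a + n) / ((b + n) * ((n : ℂ) + 1)))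
        Filter.atTop (nhds 0) := by
      have heq : (fun n : ℕ => (a + n) / ((b + n) * ((n : ℂ) + 1)))
          = fun n : ℕ => (1 + (a - b) / (b + n)) * (1 / ((n : ℂ) + 1)) := by
        funext n
        have e1 := hbk n
        have e2 := hn1 n
        field_simp
        ring
      rw [heq]
      have := ((tendsto_const_nhds (x := (1:ℂ))).add h1).mul h2
      simpa using this
    have := h3.norm
    simpa using this
  -- summability of the coefficient series at every radius
  have hc : ∀ r : ℝ, 1 ≤ r → Summable fun n => ‖c n‖ * r ^ n := by
    intro r hr
    apply summable_of_ratio_norm_eventually_le (r := 1/2) (by norm_num)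
    have hev : ∀ᶠ n : ℕ in Filter.atTop,
        ‖(a + n) / ((b + n) * ((n : ℂ) + 1))‖ < 1 / (2 * r) := by
      apply hT.eventually_lt_const
      positivity
    filter_upwards [hev] with n hn
    have hcn1 : ‖c (n+1)‖ = ‖c n‖ * ‖(a + n) / ((b + n) * ((n : ℂ) + 1))‖ := by
      rw [hratio n, norm_mul]
    have h0 : (0:ℝ) ≤ ‖c n‖ * r ^ n := by positivity
    rw [Real.norm_of_nonneg (by positivity), Real.norm_of_nonneg h0]
    calc ‖c (n+1)‖ * r ^ (n+1) = (‖c n‖ * r ^ n) * (‖(a + n) / ((b + n) * ((n : ℂ) + 1))‖ * r) := by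
          rw [hcn1]; ring
      _ ≤ (‖c n‖ * r ^ n) * ((1 / (2*r)) * r) := by
          apply mul_le_mul_of_nonneg_left _ h0
          apply mul_le_mul_of_nonneg_right hn.le (by linarith)
      _ = 1/2 * (‖c n‖ * r ^ n) := by field_simp
  -- derived coefficient sequences
  set c₁ : ℕ → ℂ := fun n => c (n+1) * ((n : ℂ) + 1) with hc1def
  set c₂ : ℕ → ℂ := fun n => c₁ (n+1) * ((n : ℂ) + 1) with hc2def
  have hc₁ : ∀ r : ℝ, 1 ≤ r → Summable fun n => ‖c₁ n‖ * r ^ n := kummer_aux_shift c hc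
  have hc₂ : ∀ r : ℝ, 1 ≤ r → Summable fun n => ‖c₂ n‖ * r ^ n := kummer_aux_shift c₁ hc₁
  -- rewrite the function
  have hFeq : (fun w : ℂ => ∑' n : ℕ, ascFac a n / ascFac b n * w ^ n / (n.factorial : ℂ))
      = fun w : ℂ => ∑' n : ℕ, c n * w ^ n := by
    funext w
    apply tsum_congr
    intro n
    simp only [hcdef]
    ring
  have hF' : deriv (fun w : ℂ => ∑' n : ℕ, c n * w ^ n)
      = fun z : ℂ => ∑' n : ℕ, c₁ n * z ^ n := by
    funext z
    exact (kummer_aux_hasDerivAt c hc z).deriv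
  have hF'' : deriv (fun w : ℂ => ∑' n : ℕ, c₁ n * w ^ n)
      = fun z : ℂ => ∑' n : ℕ, c₂ n * z ^ n := by
    funext z
    exact (kummer_aux_hasDerivAt c₁ hc₁ z).deriv
  refine ⟨?_, ?_, ?_⟩
  · intro z
    have := kummer_aux_summable c hc z
    apply this.congr
    intro n
    simp only [hcdef]
    ring
  · rw [hFeq]
    intro z
    exact (kummer_aux_hasDerivAt c hc z).differentiableAt
  · intro z
    rw [hFeq, hF', hF'']
    set S0 : ℂ := ∑' n : ℕ, c n * z ^ n with hS0
    set S1 : ℂ := ∑' n : ℕ, c₁ n * z ^ n with hS1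
    set S2 : ℂ := ∑' n : ℕ, c₂ n * z ^ n with hS2
    have h0 : HasSum (fun n : ℕ => c n * z ^ n) S0 := (kummer_aux_summable c hc z).hasSum
    have h1 : HasSum (fun n : ℕ => c₁ n * z ^ n) S1 := (kummer_aux_summable c₁ hc₁ z).hasSum
    have h2 : HasSum (fun n : ℕ => c₂ n * z ^ n) S2 := (kummer_aux_summable c₂ hc₂ z).hasSum
    -- shifted series for z * S2
    set G2 : ℕ → ℂ := fun n => (n : ℂ) * ((n : ℂ) + 1) * c (n+1) * z ^ n with hG2
    set G1 : ℕ → ℂ := fun n => (n : ℂ) * c n * z ^ n with hG1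
    have hg2 : HasSum G2 (z * S2) := by
      have A := h2.mul_left z
      have hsh : (fun n : ℕ => z * (c₂ n * z ^ n)) = fun n : ℕ => G2 (n + 1) := by
        funext n
        simp only [hG2, hc2def, hc1def]
        push_cast
        ring
      rw [hsh, hasSum_nat_add_iff 1] at A
      simpa [hG2] using A
    have hg1 : HasSum G1 (z * S1) := by
      have A := h1.mul_left z
      have hsh : (fun n : ℕ => z * (c₁ n * z ^ n)) = fun n : ℕ => G1 (n + 1) := by
        funext n
        simp only [hG1, hc1def]
        push_cast
        ring
      rw [hsh, hasSum_nat_add_iff 1] at A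
      simpa [hG1] using A
    have hb1 : HasSum (fun n : ℕ => b * (c₁ n * z ^ n)) (b * S1) := h1.mul_left b
    have ha0 : HasSum (fun n : ℕ => a * (c n * z ^ n)) (a * S0) := h0.mul_left a
    have H : HasSum (fun n : ℕ => G2 n + b * (c₁ n * z ^ n) - G1 n - a * (c n * z ^ n))
        (z * S2 + b * S1 - z * S1 - a * S0) := ((hg2.add hb1).sub hg1).sub ha0
    have hzero : (fun n : ℕ => G2 n + b * (c₁ n * z ^ n) - G1 n - a * (c n * z ^ n))
        = fun _ : ℕ => (0 : ℂ) := by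
      funext n
      simp only [hG2, hG1, hc1def]
      linear_combination z ^ n * hrec n
    rw [hzero] at H
    have hfin : z * S2 + b * S1 - z * S1 - a * S0 = 0 := H.unique hasSum_zero
    rw [show (∑' n : ℕ, ascFac a n / ascFac b n * z ^ n / (n.factorial : ℂ)) = S0
      from congrFun hFeq z]
    linear_combination hfin
end
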